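/- Let Ȟ⁰ be a square invertible rational matrix, G⁰ strictly proper with (I − G⁰) invertible. Then the network equation w = G⁰w + R⁰r + Ȟ⁰ě can be rewritten as w = (I − (Ȟ⁰)^{-1}(I − G⁰)) w + (Ȟ⁰)^{-1} R⁰ r + ě, and the filter W = I − (Ȟ⁰)^{-1}(I − G⁰) is strictly proper whenever Ȟ⁰ is monic (feedthrough I) and G⁰ is strictly proper. -/

import Mathlib

open Matrix

/-- Proposition 1, predictor derivation: transfer matrices are modelled
as matrices over `ℝ[[z⁻¹]]` (formal power series in the delay variable), so that the
feedthrough `lim_{z→∞}` is the constant-coefficient map.  If `Ȟ⁰` is square and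
invertible, then the network equation `w = G⁰w + R⁰r + Ȟ⁰ě` can be rewritten as
`w = (I - (Ȟ⁰)⁻¹(I - G⁰))w + (Ȟ⁰)⁻¹R⁰r + ě`; moreover the predictor filter
`W = I - (Ȟ⁰)⁻¹(I - G⁰)` is strictly proper whenever `Ȟ⁰` is monic and `G⁰` is
strictly proper. -/
theorem stmt18 (L K : ℕ)
    (G : Matrix (Fin L) (Fin L) (PowerSeries ℝ))
    (Rm : Matrix (Fin L) (Fin K) (PowerSeries ℝ))
    (H : Matrix (Fin L) (Fin L) (PowerSeries ℝ)) [Invertible H]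
    (hG : G.map (PowerSeries.constantCoeff (R := ℝ)) = 0)
    (hH : H.map (PowerSeries.constantCoeff (R := ℝ)) = 1) :
    (∀ (w e : Fin L → PowerSeries ℝ) (r : Fin K → PowerSeries ℝ),
      w = G.mulVec w + Rm.mulVec r + H.mulVec e →
        w = (1 - H⁻¹ * (1 - G)).mulVec w + (H⁻¹ * Rm).mulVec r + e) ∧
    (1 - H⁻¹ * (1 - G)).map (PowerSeries.constantCoeff (R := ℝ)) = 0 := by
  have hinv : H⁻¹ * H = 1 := Matrix.inv_mul_of_invertible H
  constructor
  · intro w e r hw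
    have he : H.mulVec e = w - G.mulVec w - Rm.mulVec r := by
      linear_combination -hw
    have he2 : e = H⁻¹.mulVec (w - G.mulVec w - Rm.mulVec r) := by
      rw [← he, Matrix.mulVec_mulVec, hinv, Matrix.one_mulVec]
    rw [he2]
    simp only [mul_sub, mul_one, Matrix.sub_mulVec, Matrix.one_mulVec,
      Matrix.mulVec_sub, ← Matrix.mulVec_mulVec]
    abel
  · have hmap : ∀ (A B : Matrix (Fin L) (Fin L) (PowerSeries ℝ)),
        (A * B).map (PowerSeries.constantCoeff (R := ℝ))
          = A.map (PowerSeries.constantCoeff (R := ℝ)) * B.map (PowerSeries.constantCoeff (R := ℝ)) :=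
      fun A B => map_mul ((PowerSeries.constantCoeff (R := ℝ)).mapMatrix) A B
    have h1 : (H⁻¹).map (PowerSeries.constantCoeff (R := ℝ)) = 1 := by
      have := congrArg (Matrix.map · (PowerSeries.constantCoeff (R := ℝ))) hinv
      simp only [hmap, hH, mul_one] at this
      rw [Matrix.map_one _ (map_zero _) (map_one _)] at this
      exact this
    have h2 : ((1 : Matrix (Fin L) (Fin L) (PowerSeries ℝ)) - G).map
        (PowerSeries.constantCoeff (R := ℝ)) = 1 := by
      have : ((1 : Matrix (Fin L) (Fin L) (PowerSeries ℝ)) - G).map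
          (PowerSeries.constantCoeff (R := ℝ))
          = (1 : Matrix (Fin L) (Fin L) (PowerSeries ℝ)).map (PowerSeries.constantCoeff (R := ℝ))
            - G.map (PowerSeries.constantCoeff (R := ℝ)) :=
        map_sub ((PowerSeries.constantCoeff (R := ℝ)).mapMatrix) 1 G
      rw [this, hG, sub_zero]
      exact map_one ((PowerSeries.constantCoeff (R := ℝ)).mapMatrix)
    have : ((1 : Matrix (Fin L) (Fin L) (PowerSeries ℝ)) - H⁻¹ * (1 - G)).map
        (PowerSeries.constantCoeff (R := ℝ))
        = (1 : Matrix (Fin L) (Fin L) (PowerSeries ℝ)).map (PowerSeries.constantCoeff (R := ℝ))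
          - (H⁻¹ * (1 - G)).map (PowerSeries.constantCoeff (R := ℝ)) :=
      map_sub ((PowerSeries.constantCoeff (R := ℝ)).mapMatrix) 1 _
    rw [this, hmap, h1, h2, mul_one]
    rw [Matrix.map_one _ (map_zero _) (map_one _), sub_self]
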